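/- For distinct points x, y, z in ℝⁿ with g_z(x) = (x−z)/|x−z|, one has |g_z(x) − g_z(y)| = (2|x−y|/(|x−z|+|y−z|)) · cos((∠zyx − ∠zxy)/2). -/

import Mathlib

open EuclideanGeometry

private lemma real_sin_add_sin (p q : ℝ) :
    Real.sin p + Real.sin q = 2 * Real.sin ((p + q) / 2) * Real.cos ((p - q) / 2) := by
  have h1 := Real.sin_add ((p + q) / 2) ((p - q) / 2)
  have h2 := Real.sin_sub ((p + q) / 2) ((p - q) / 2)
  rw [show (p + q) / 2 + (p - q) / 2 = p by ring] at h1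
  rw [show (p + q) / 2 - (p - q) / 2 = q by ring] at h2
  rw [h1, h2]; ring

set_option maxHeartbeats 1000000 in
open RealInnerProductSpace in
theorem stmt1 (n : ℕ) (x y z : EuclideanSpace ℝ (Fin n))
    (hxy : x ≠ y) (hxz : x ≠ z) (hyz : y ≠ z) :
    ‖(‖x - z‖⁻¹ • (x - z)) - (‖y - z‖⁻¹ • (y - z))‖ =
      2 * ‖x - y‖ / (‖x - z‖ + ‖y - z‖) *
        Real.cos ((∠ z y x - ∠ z x y) / 2) := by
  set u : EuclideanSpace ℝ (Fin n) := x - z with hu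
  set v : EuclideanSpace ℝ (Fin n) := y - z with hv
  have hu0 : u ≠ 0 := sub_ne_zero.2 hxz
  have hv0 : v ≠ 0 := sub_ne_zero.2 hyz
  have huv : u - v = x - y := by rw [hu, hv]; abel
  have huv0 : u - v ≠ 0 := by rw [huv]; exact sub_ne_zero.2 hxy
  have ha : (0:ℝ) < ‖u‖ := norm_pos_iff.2 hu0
  have hb : (0:ℝ) < ‖v‖ := norm_pos_iff.2 hv0
  have hc : (0:ℝ) < ‖u - v‖ := norm_pos_iff.2 huv0
  -- identify the three angles
  have hβ : ∠ z y x = InnerProductGeometry.angle v (v - u) := by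
    rw [EuclideanGeometry.angle, vsub_eq_sub, vsub_eq_sub,
      show z - y = -v by rw [hv]; abel, show x - y = -(v - u) by rw [hu, hv]; abel,
      InnerProductGeometry.angle_neg_neg]
  have hα : ∠ z x y = InnerProductGeometry.angle u (u - v) := by
    rw [EuclideanGeometry.angle, vsub_eq_sub, vsub_eq_sub,
      show z - x = -u by rw [hu]; abel, show y - x = -(u - v) by rw [hu, hv]; abel,
      InnerProductGeometry.angle_neg_neg]
  set θ := InnerProductGeometry.angle u v with hθ
  set α := InnerProductGeometry.angle u (u - v) with hαd
  set β := InnerProductGeometry.angle v (v - u) with hβd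
  rw [hβ, hα, ← huv]
  -- InnerProductGeometry.angle sum
  have hsum : θ + α + β = Real.pi := InnerProductGeometry.angle_add_angle_sub_add_angle_sub_eq_pi u hv0
  have hθ0 : 0 ≤ θ := InnerProductGeometry.angle_nonneg _ _
  have hθπ : θ ≤ Real.pi := InnerProductGeometry.angle_le_pi _ _
  have hα0 : 0 ≤ α := InnerProductGeometry.angle_nonneg _ _
  have hβ0 : 0 ≤ β := InnerProductGeometry.angle_nonneg _ _
  -- left-hand side equals 2 sin (θ/2)
  have hinner : ⟪u, v⟫ = Real.cos θ * (‖u‖ * ‖v‖) := by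
    rw [hθ, InnerProductGeometry.cos_angle]; field_simp
  have hone_u : ‖‖u‖⁻¹ • u‖ = 1 := norm_smul_inv_norm hu0
  have hone_v : ‖‖v‖⁻¹ • v‖ = 1 := norm_smul_inv_norm hv0
  have hL2 : ‖(‖u‖⁻¹ • u) - (‖v‖⁻¹ • v)‖ ^ 2 = 2 - 2 * Real.cos θ := by
    rw [norm_sub_sq_real, hone_u, hone_v, real_inner_smul_left, real_inner_smul_right, hinner]
    field_simp
    ring
  have hsinhalf : (0:ℝ) ≤ Real.sin (θ/2) :=
    Real.sin_nonneg_of_nonneg_of_le_pi (by linarith) (by linarith [Real.pi_pos])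
  have h4 : 2 - 2 * Real.cos θ = (2 * Real.sin (θ/2)) ^ 2 := by
    have h1 : Real.cos (2 * (θ/2)) = 2 * Real.cos (θ/2) ^ 2 - 1 := Real.cos_two_mul _
    have h2 : Real.sin (θ/2) ^ 2 + Real.cos (θ/2) ^ 2 = 1 := Real.sin_sq_add_cos_sq _
    rw [show 2 * (θ/2) = θ by ring] at h1
    nlinarith
  have hLHS : ‖(‖u‖⁻¹ • u) - (‖v‖⁻¹ • v)‖ = 2 * Real.sin (θ/2) := by
    have h2 : (0:ℝ) ≤ 2 * Real.sin (θ/2) := by linarith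
    have h3 : ‖(‖u‖⁻¹ • u) - (‖v‖⁻¹ • v)‖ ^ 2 = (2 * Real.sin (θ/2)) ^ 2 := by
      rw [hL2, h4]
    calc ‖(‖u‖⁻¹ • u) - (‖v‖⁻¹ • v)‖
        = Real.sqrt (‖(‖u‖⁻¹ • u) - (‖v‖⁻¹ • v)‖ ^ 2) := (Real.sqrt_sq (norm_nonneg _)).symm
      _ = Real.sqrt ((2 * Real.sin (θ/2)) ^ 2) := by rw [h3]
      _ = 2 * Real.sin (θ/2) := Real.sqrt_sq h2
  rw [hLHS]
  -- law of sines: sin α * ‖u-v‖ = sin θ * ‖v‖  and  sin β * ‖u-v‖ = sin θ * ‖u‖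
  have gram : ∀ w w' : EuclideanSpace ℝ (Fin n),
      Real.sin (InnerProductGeometry.angle w w') * (‖w‖ * ‖w'‖)
        = Real.sqrt (⟪w, w⟫ * ⟪w', w'⟫ - ⟪w, w'⟫ * ⟪w, w'⟫) :=
    fun w w' => InnerProductGeometry.sin_angle_mul_norm_mul_norm w w'
  have hlawα : Real.sin α * (‖u‖ * ‖u - v‖) = Real.sin θ * (‖u‖ * ‖v‖) := by
    rw [hαd, hθ, gram, gram]
    congr 1
    simp only [inner_sub_left, inner_sub_right, real_inner_comm v u]
    ring
  have hlawβ : Real.sin β * (‖v‖ * ‖u - v‖) = Real.sin θ * (‖u‖ * ‖v‖) := by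
    rw [hβd, hθ, norm_sub_rev u v, gram, gram]
    congr 1
    simp only [inner_sub_left, inner_sub_right, real_inner_comm v u]
    ring
  have hS1 : Real.sin α * ‖u - v‖ = Real.sin θ * ‖v‖ := by
    have h2 : ‖u‖ * (Real.sin α * ‖u - v‖) = ‖u‖ * (Real.sin θ * ‖v‖) := by
      ring_nf; ring_nf at hlawα; linarith
    exact mul_left_cancel₀ ha.ne' h2
  have hS2 : Real.sin β * ‖u - v‖ = Real.sin θ * ‖u‖ := by
    have h2 : ‖v‖ * (Real.sin β * ‖u - v‖) = ‖v‖ * (Real.sin θ * ‖u‖) := by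
      ring_nf; ring_nf at hlawβ; linarith
    exact mul_left_cancel₀ hb.ne' h2
  clear_value θ α β
  by_cases hπ : θ = Real.pi
  · -- degenerate case: z between x and y
    have hαβ : α = 0 ∧ β = 0 := by constructor <;> linarith [hsum, hπ, hα0, hβ0]
    have hcab : ‖u - v‖ = ‖u‖ + ‖v‖ :=
      InnerProductGeometry.norm_sub_eq_add_norm_of_angle_eq_pi (hθ ▸ hπ)
    rw [hπ, hαβ.1, hαβ.2, hcab]
    have habpos : (0:ℝ) < ‖u‖ + ‖v‖ := by linarith
    simp [Real.sin_pi_div_two]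
    rw [mul_div_assoc, div_self habpos.ne']
    norm_num
  · -- non-degenerate: cos (θ/2) > 0
    have hθlt : θ < Real.pi := lt_of_le_of_ne hθπ hπ
    have hcoshalf : 0 < Real.cos (θ/2) :=
      Real.cos_pos_of_mem_Ioo ⟨by linarith [Real.pi_pos], by linarith⟩
    have hsin2 : Real.sin θ = 2 * Real.sin (θ/2) * Real.cos (θ/2) := by
      rw [show θ = 2 * (θ/2) by ring, Real.sin_two_mul]
      ring_nf
    have hadd : Real.sin α + Real.sin β
        = 2 * Real.sin ((α + β)/2) * Real.cos ((α - β)/2) := real_sin_add_sin α β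
    have hab2 : Real.sin ((α + β)/2) = Real.cos (θ/2) := by
      rw [show (α + β)/2 = Real.pi/2 - θ/2 by linarith, Real.sin_pi_div_two_sub]
    have hkey : ‖u - v‖ * Real.cos ((α - β)/2) = Real.sin (θ/2) * (‖u‖ + ‖v‖) := by
      have hsum2 : (Real.sin α + Real.sin β) * ‖u - v‖ = Real.sin θ * (‖u‖ + ‖v‖) := by
        rw [add_mul, hS1, hS2]; ring
      rw [hadd, hab2, hsin2] at hsum2
      have : Real.cos (θ/2) * (‖u - v‖ * Real.cos ((α - β)/2))
          = Real.cos (θ/2) * (Real.sin (θ/2) * (‖u‖ + ‖v‖)) := by ring_nf; ring_nf at hsum2; linarith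
      exact mul_left_cancel₀ (ne_of_gt hcoshalf) this
    have hcosev : Real.cos ((β - α)/2) = Real.cos ((α - β)/2) := by
      rw [show (β - α)/2 = -((α - β)/2) by ring, Real.cos_neg]
    have habpos : (0:ℝ) < ‖u‖ + ‖v‖ := by linarith
    rw [hcosev, show 2 * ‖u - v‖ / (‖u‖ + ‖v‖) * Real.cos ((α - β)/2)
        = 2 * (‖u - v‖ * Real.cos ((α - β)/2)) / (‖u‖ + ‖v‖) by ring, hkey]
    field_simp
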